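/- Let N = 2n, fix ρ ∈ ℂ, fix the orthogonal or symplectic signs θ (upper/lower sign below), set κ = (ρ±1)/2, and let F_{ij} = E_{ij} − θ_{ij} E_{j̄ ī} ∈ 𝔤𝔩_{2n}. Define 𝓛^±(u) ∈ Mat_{2n}(U(𝔤𝔩_{2n})) for u ≠ −κ by 𝓛^±(u)_{ij} = δ_{ij}·1 − (u+κ)⁻¹ ι(F_{ji}). Then 𝓛^± satisfies the symmetry relation (𝓛^±)^t(−u−ρ) = 𝓛^±(u) ± (𝓛^±(u) − 𝓛^±(−u−ρ))/(2u+ρ) for all u with 2u+ρ ≠ 0 and u, −u−ρ ≠ −κ, where the transposition t is applied entrywise to the matrix over U(𝔤𝔩_{2n}). -/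

import Mathlib

noncomputable section

open Matrix

attribute [local instance 100] LieRing.ofAssociativeRing

/-- The Lie algebra `𝔤𝔩_{2n}` of `2n×2n` complex matrices (commutator bracket). -/
abbrev gl (n : ℕ) := Matrix (Fin (2 * n)) (Fin (2 * n)) ℂ

/-- The universal enveloping algebra `U(𝔤𝔩_{2n})`. -/
abbrev Ugl (n : ℕ) := UniversalEnvelopingAlgebra ℂ (gl n)

/-- The standard matrix units `E_{ij}` of `𝔤𝔩_{2n}`. -/
def Eu (n : ℕ) (i j : Fin (2 * n)) : gl n := Matrix.single i j 1

/-- `F_{ij} = E_{ij} − θ_{ij} E_{j̄ ī}` where `ī = 2n − i + 1` corresponds to `Fin.rev`. -/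
def Fel (n : ℕ) (θ : Fin (2 * n) → ℂ) (i j : Fin (2 * n)) : gl n :=
  Eu n i j - (θ i * θ j) • Eu n (Fin.rev j) (Fin.rev i)

/-- The boundary Lax matrix `𝓛^±(u)_{ij} = δ_{ij}·1 − (u+κ)⁻¹ ι(F_{ji})`. -/
def laxPM (n : ℕ) (θ : Fin (2 * n) → ℂ) (κ u : ℂ) :
    Matrix (Fin (2 * n)) (Fin (2 * n)) (Ugl n) :=
  fun i j => (if i = j then 1 else 0)
    - (u + κ)⁻¹ • (UniversalEnvelopingAlgebra.ι ℂ (Fel n θ j i))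

/-- The transposition `t` (`(e_{ij})^t = θ_{ij} e_{j̄ ī}`) applied entrywise to a
matrix over an algebra. -/
def transpA (n : ℕ) (θ : Fin (2 * n) → ℂ) {A : Type*} [Ring A] [Algebra ℂ A]
    (M : Matrix (Fin (2 * n)) (Fin (2 * n)) A) : Matrix (Fin (2 * n)) (Fin (2 * n)) A :=
  fun a b => (θ (Fin.rev b) * θ (Fin.rev a)) • M (Fin.rev b) (Fin.rev a)

lemma theta_rev_mul (n : ℕ) (θ : Fin (2*n) → ℂ)
    (hθ1 : (∀ i, θ i = 1) ∨ (∀ i : Fin (2*n), θ i = if (i:ℕ) < n then -1 else 1)) :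
    ∀ i j, θ (Fin.rev i) * θ (Fin.rev j) = θ i * θ j := by
  intro i j
  rcases hθ1 with h | h
  · simp [h]
  · have hrev : ∀ k : Fin (2*n), θ (Fin.rev k) = - θ k := by
      intro k
      have hk := k.isLt
      rcases lt_or_ge (k:ℕ) n with hkn | hkn
      · have h2 : ¬ ((Fin.rev k : ℕ) < n) := by
          simp only [Fin.val_rev]; omega
        rw [h, h, if_neg h2, if_pos hkn]; ring
      · have h2 : (Fin.rev k : ℕ) < n := by
          simp only [Fin.val_rev]; omega
        rw [h, h, if_pos h2, if_neg (Nat.not_lt.mpr hkn)]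
    rw [hrev, hrev]; ring

lemma theta_sq (n : ℕ) (θ : Fin (2*n) → ℂ)
    (hθ1 : (∀ i, θ i = 1) ∨ (∀ i : Fin (2*n), θ i = if (i:ℕ) < n then -1 else 1)) :
    ∀ i, θ i * θ i = 1 := by
  intro i
  rcases hθ1 with h | h
  · simp [h]
  · rw [h]; split_ifs <;> norm_num

lemma Fel_rev (n : ℕ) (θ : Fin (2*n) → ℂ)
    (hsq : ∀ i, θ i * θ i = 1)
    (hrev : ∀ i j, θ (Fin.rev i) * θ (Fin.rev j) = θ i * θ j) (a b : Fin (2*n)) :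
    (θ (Fin.rev b) * θ (Fin.rev a)) • Fel n θ (Fin.rev a) (Fin.rev b) = - Fel n θ b a := by
  unfold Fel
  simp only [Fin.rev_rev, smul_sub, smul_smul]
  rw [show (θ (Fin.rev b) * θ (Fin.rev a)) * (θ (Fin.rev a) * θ (Fin.rev b))
      = (θ (Fin.rev a) * θ (Fin.rev a)) * (θ (Fin.rev b) * θ (Fin.rev b)) by ring,
    hsq, hsq, mul_one, one_smul, hrev b a]
  module

/-- with `κ = (ρ±1)/2`, the boundary Lax matrix satisfies the symmetry
relation `(𝓛^±)^t(−u−ρ) = 𝓛^±(u) ± (𝓛^±(u) − 𝓛^±(−u−ρ))/(2u+ρ)`.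
The sign `ε = +1` corresponds to the orthogonal case, `ε = −1` to the symplectic case. -/
theorem boundary_lax_symmetry (n : ℕ) (ρ : ℂ) (θ : Fin (2 * n) → ℂ) (ε : ℂ)
    (hcase : ((∀ i, θ i = 1) ∧ ε = 1) ∨
      ((∀ i : Fin (2 * n), θ i = if (i : ℕ) < n then -1 else 1) ∧ ε = -1))
    (u : ℂ) (h2u : 2 * u + ρ ≠ 0)
    (hu : u ≠ -((ρ + ε) / 2)) (hu' : -u - ρ ≠ -((ρ + ε) / 2)) :
    transpA n θ (laxPM n θ ((ρ + ε) / 2) (-u - ρ)) =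
      laxPM n θ ((ρ + ε) / 2) u +
        (ε * (2 * u + ρ)⁻¹) •
          (laxPM n θ ((ρ + ε) / 2) u - laxPM n θ ((ρ + ε) / 2) (-u - ρ)) := by
  have hθ1 : (∀ i, θ i = 1) ∨ (∀ i : Fin (2*n), θ i = if (i:ℕ) < n then -1 else 1) :=
    hcase.imp And.left And.left
  have hε2 : ε * ε = 1 := by rcases hcase with ⟨_, h⟩ | ⟨_, h⟩ <;> rw [h] <;> ring
  have hsq := theta_sq n θ hθ1
  have hrev := theta_rev_mul n θ hθ1
  set κ := (ρ + ε) / 2 with hκ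
  have hc : u + κ ≠ 0 := fun h => hu (by linear_combination h)
  have hd : -u - ρ + κ ≠ 0 := fun h => hu' (by linear_combination h)
  funext a b
  simp only [transpA, laxPM, Matrix.add_apply, Matrix.smul_apply, Matrix.sub_apply]
  have hδ : (if Fin.rev b = Fin.rev a then (1 : Ugl n) else 0)
      = (if a = b then 1 else 0) := by
    simp only [Fin.rev_inj]
    by_cases h : a = b
    · simp [h]
    · rw [if_neg (fun hh => h hh.symm), if_neg h]
  have hL : (θ (Fin.rev b) * θ (Fin.rev a)) •
      ((if Fin.rev b = Fin.rev a then (1 : Ugl n) else 0)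
        - (-u - ρ + κ)⁻¹ • (UniversalEnvelopingAlgebra.ι ℂ (Fel n θ (Fin.rev a) (Fin.rev b))))
      = (if a = b then (1 : Ugl n) else 0)
        + (-u - ρ + κ)⁻¹ • UniversalEnvelopingAlgebra.ι ℂ (Fel n θ b a) := by
    have t1 : (θ (Fin.rev b) * θ (Fin.rev a)) • (if a = b then (1 : Ugl n) else 0)
        = (if a = b then 1 else 0) := by
      by_cases h : a = b
      · subst h; simp [hrev, hsq]
      · simp [h]
    have t2 : (θ (Fin.rev b) * θ (Fin.rev a)) •
        ((-u - ρ + κ)⁻¹ • UniversalEnvelopingAlgebra.ι ℂ (Fel n θ (Fin.rev a) (Fin.rev b)))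
        = -((-u - ρ + κ)⁻¹ • UniversalEnvelopingAlgebra.ι ℂ (Fel n θ b a)) := by
      rw [smul_comm, ← map_smul, Fel_rev n θ hsq hrev a b, map_neg,
        smul_neg]
    rw [smul_sub, hδ, t1, t2, sub_neg_eq_add]
  rw [hL]
  match_scalars
  case _ => ring
  have key : ∀ A B S e : ℂ, A ≠ 0 → B ≠ 0 → S ≠ 0 → A + B = e → A - B = S →
      B⁻¹ * 1 = -(A⁻¹ * 1) + e * S⁻¹ * (-(A⁻¹ * 1) - -(B⁻¹ * 1)) := by
    intro A B S e hA hB hS hAB hS2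
    subst hAB hS2
    field_simp
    ring
  exact key (u + κ) (-u - ρ + κ) (2 * u + ρ) ε hc hd h2u (by rw [hκ]; ring) (by ring)
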